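/- Let i ∈ [k+4] and j ∈ I_i. Then E_j^i is the disjoint union of the sets F_{j,t}^i over t ∈ I_j^i together with F_j^i: every σ ∈ E_j^i lies in exactly one of these sets. -/
import Mathlib


open Finset

/-- Potential vertices of `KG_{2,k}`: finite subsets of `[k+4]` (modelled as `ZMod (k+4)`);
actual vertices are those of cardinality 2. -/
abbrev Vtx (k : ℕ) := Finset (ZMod (k + 4))

/-- `S_σ`, the union of the pairs in `σ`. -/
def Sσ {k : ℕ} (σ : Finset (Vtx k)) : Finset (ZMod (k + 4)) := σ.sup id

/-- `C_σ = [k+4] \ S_σ`. -/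
def Cσ {k : ℕ} (σ : Finset (Vtx k)) : Finset (ZMod (k + 4)) := Finset.univ \ σ.sup id

/-- Adjacency in the Kneser graph `KG_{2,k}`: two 2-subsets that are disjoint. -/
def kgAdj {k : ℕ} (u v : Vtx k) : Prop := u.card = 2 ∧ v.card = 2 ∧ Disjoint u v

/-- A stable vertex: a 2-subset containing no two cyclically consecutive elements. -/
def IsStable {k : ℕ} (u : Vtx k) : Prop := u.card = 2 ∧ ∀ a ∈ u, a + 1 ∉ u

/-- Adjacency in `S_{2,k}`: a Kneser edge at least one of whose endpoints is stable. -/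
def sAdj {k : ℕ} (u v : Vtx k) : Prop := kgAdj u v ∧ (IsStable u ∨ IsStable v)

/-- `σ` is a face of the neighborhood complex `N(KG_{2,k})`: the members of `σ`
have a common neighbor in `KG_{2,k}`. -/
def kgFace {k : ℕ} (σ : Finset (Vtx k)) : Prop :=
  ∃ v : Vtx k, v.card = 2 ∧ ∀ u ∈ σ, kgAdj v u

/-- `σ` is a face of the neighborhood complex `N(S_{2,k})`. -/
def sFace {k : ℕ} (σ : Finset (Vtx k)) : Prop :=
  ∃ v : Vtx k, v.card = 2 ∧ ∀ u ∈ σ, sAdj v u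

/-- `X_{i,i+1}` (explicit description): sets `σ` of vertices each disjoint from
`{i,i+1}`, with `C_σ = {i,i+1}`, containing `{j,j+1}` for some `j ≠ i`. -/
def XsetC {k : ℕ} (i : ZMod (k + 4)) (σ : Finset (Vtx k)) : Prop :=
  (∀ u ∈ σ, u.card = 2 ∧ Disjoint u ({i, i + 1} : Vtx k)) ∧
  Cσ σ = {i, i + 1} ∧
  ∃ j : ZMod (k + 4), j ≠ i ∧ ({j, j + 1} : Vtx k) ∈ σ

/-- `I_i = [k+4] \ {i-1, i, i+1}`. -/
def Ii {k : ℕ} (i : ZMod (k + 4)) : Finset (ZMod (k + 4)) :=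
  Finset.univ \ {i - 1, i, i + 1}

/-- `E_j^i ⊆ X_{i,i+1}`: those `σ` for which `j` is the least index in `I_i`
(with respect to the order of `[k+4]`, via `ZMod.val`) with `{j,j+1} ∈ σ`. -/
def Eji {k : ℕ} (i j : ZMod (k + 4)) (σ : Finset (Vtx k)) : Prop :=
  XsetC i σ ∧ ({j, j + 1} : Vtx k) ∈ σ ∧
    ∀ s ∈ Ii i, s.val < j.val → ({s, s + 1} : Vtx k) ∉ σ

/-- `I_j^i = [k+4] \ {i, i+1, j-1, j, j+1}`. -/
def Iji {k : ℕ} (i j : ZMod (k + 4)) : Finset (ZMod (k + 4)) :=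
  Finset.univ \ {i, i + 1, j - 1, j, j + 1}

/-- `𝓘_t = {r ∈ I_j^i : r < t}` (order of `[k+4]`, via `ZMod.val`). -/
def It {k : ℕ} (i j t : ZMod (k + 4)) : Finset (ZMod (k + 4)) :=
  (Iji i j).filter fun r => r.val < t.val

/-- `F_{j,t}^i`: those `σ ∈ E_j^i` such that for all `r ∈ 𝓘_t`, `{j,r} ∈ σ` and
`r ∈ C_{σ \ {j,r}}`, and either `{j,t} ∉ σ` or `C_{σ \ {j,t}} = {i,i+1}`. -/
def Fjt {k : ℕ} (i j t : ZMod (k + 4)) (σ : Finset (Vtx k)) : Prop :=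
  Eji i j σ ∧
  (∀ r ∈ It i j t, ({j, r} : Vtx k) ∈ σ ∧ r ∈ Cσ (σ.erase {j, r})) ∧
  (({j, t} : Vtx k) ∉ σ ∨ Cσ (σ.erase {j, t}) = {i, i + 1})

/-- `F_j^i`: those `σ ∈ E_j^i` with `{j,s} ∈ σ` and `C_{σ \ {j,s}} = {i,i+1,s}`
for every `s ∈ I_j^i`. -/
def Fj {k : ℕ} (i j : ZMod (k + 4)) (σ : Finset (Vtx k)) : Prop :=
  Eji i j σ ∧
  ∀ s ∈ Iji i j, ({j, s} : Vtx k) ∈ σ ∧ Cσ (σ.erase {j, s}) = {i, i + 1, s}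

section Aux

variable {k : ℕ}

lemma aux_one_ne_zero : (1 : ZMod (k + 4)) ≠ 0 := by
  have : Fact (1 < k + 4) := ⟨by omega⟩
  exact one_ne_zero

lemma aux_mem_Cσ {σ : Finset (Vtx k)} {x : ZMod (k + 4)} :
    x ∈ Cσ σ ↔ ∀ u ∈ σ, x ∉ u := by
  simp only [Cσ, Finset.mem_sdiff, Finset.mem_univ, true_and, Finset.mem_sup, id]
  push_neg
  rfl

lemma aux_pair_ne {j t : ZMod (k + 4)} (h1 : t ≠ j + 1) :
    ({j, j + 1} : Vtx k) ≠ {j, t} := by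
  intro h
  have hmem : j + 1 ∈ ({j, t} : Vtx k) := by
    rw [← h]; simp
  simp only [Finset.mem_insert, Finset.mem_singleton] at hmem
  rcases hmem with h' | h'
  · exact aux_one_ne_zero (add_eq_left.mp h')
  · exact h1 h'.symm

lemma aux_mem_Iji {i j t : ZMod (k + 4)} (h : t ∈ Iji i j) :
    t ≠ i ∧ t ≠ i + 1 ∧ t ≠ j - 1 ∧ t ≠ j ∧ t ≠ j + 1 := by
  simp only [Iji, Finset.mem_sdiff, Finset.mem_univ, true_and, Finset.mem_insert,
    Finset.mem_singleton] at h
  push_neg at h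
  exact h

lemma aux_subset_Cσ_erase {σ : Finset (Vtx k)} {i : ZMod (k + 4)}
    (hC : Cσ σ = {i, i + 1}) (u : Vtx k) :
    ({i, i + 1} : Finset (ZMod (k + 4))) ⊆ Cσ (σ.erase u) := by
  intro x hx
  have hx' : x ∈ Cσ σ := by rw [hC]; exact hx
  rw [aux_mem_Cσ] at hx' ⊢
  exact fun v hv => hx' v (Finset.mem_of_mem_erase hv)

lemma aux_Cσ_erase_subset {σ : Finset (Vtx k)} {i j t : ZMod (k + 4)}
    (hC : Cσ σ = {i, i + 1}) (hjj : ({j, j + 1} : Vtx k) ∈ σ) (h1 : t ≠ j + 1) :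
    Cσ (σ.erase {j, t}) ⊆ {i, i + 1, t} := by
  intro x hx
  by_contra hmem
  simp only [Finset.mem_insert, Finset.mem_singleton] at hmem
  push_neg at hmem
  obtain ⟨hxi, hxi1, hxt⟩ := hmem
  have hxC : x ∉ Cσ σ := by
    rw [hC]; simp [hxi, hxi1]
  rw [aux_mem_Cσ] at hxC
  push_neg at hxC
  obtain ⟨u, hu, hxu⟩ := hxC
  rw [aux_mem_Cσ] at hx
  have hujt : u = ({j, t} : Vtx k) := by
    by_contra hne
    exact hx u (Finset.mem_erase.mpr ⟨hne, hu⟩) hxu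
  rw [hujt] at hxu
  simp only [Finset.mem_insert, Finset.mem_singleton] at hxu
  rcases hxu with h' | h'
  · have hjje : ({j, j + 1} : Vtx k) ∈ σ.erase {j, t} :=
      Finset.mem_erase.mpr ⟨aux_pair_ne h1, hjj⟩
    exact hx _ hjje (by simp [h'])
  · exact hxt h'

/-- Dichotomy: membership conditions for `t` in the erased complement. -/
lemma aux_dichotomy {σ : Finset (Vtx k)} {i j t : ZMod (k + 4)}
    (hC : Cσ σ = {i, i + 1}) (hjj : ({j, j + 1} : Vtx k) ∈ σ)
    (hti : t ≠ i) (hti1 : t ≠ i + 1) (h1 : t ≠ j + 1) :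
    (t ∈ Cσ (σ.erase {j, t}) ↔ Cσ (σ.erase {j, t}) = {i, i + 1, t}) ∧
    (t ∉ Cσ (σ.erase {j, t}) ↔ Cσ (σ.erase {j, t}) = {i, i + 1}) := by
  have hsub := aux_subset_Cσ_erase hC ({j, t} : Vtx k)
  have hsup := aux_Cσ_erase_subset hC hjj h1
  constructor
  · constructor
    · intro ht
      apply Finset.Subset.antisymm hsup
      intro x hx
      simp only [Finset.mem_insert, Finset.mem_singleton] at hx
      rcases hx with h' | h' | h'
      · exact hsub (by simp [h'])
      · exact hsub (by simp [h'])
      · rwa [h']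
    · intro h; rw [h]; simp
  · constructor
    · intro ht
      apply Finset.Subset.antisymm _ hsub
      intro x hx
      have := hsup hx
      simp only [Finset.mem_insert, Finset.mem_singleton] at this ⊢
      rcases this with h' | h' | h'
      · exact Or.inl h'
      · exact Or.inr h'
      · exact absurd (h' ▸ hx) ht
    · intro h; rw [h]; simp [hti, hti1]

end Aux

/-- For `i ∈ [k+4]` and `j ∈ I_i`, `E_j^i` is the disjoint union
of the `F_{j,t}^i`, `t ∈ I_j^i`, together with `F_j^i`: every `σ ∈ E_j^i` lies
in exactly one of these sets. -/
theorem E_eq_disjoint_union_F {k : ℕ} (i j : ZMod (k + 4)) (hj : j ∈ Ii i)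
    (σ : Finset (Vtx k)) :
    (Eji i j σ ↔ (∃ t ∈ Iji i j, Fjt i j t σ) ∨ Fj i j σ) ∧
    (∀ t ∈ Iji i j, ∀ t' ∈ Iji i j, Fjt i j t σ → Fjt i j t' σ → t = t') ∧
    ¬ ((∃ t ∈ Iji i j, Fjt i j t σ) ∧ Fj i j σ) := by
  classical
  set Q : ZMod (k + 4) → Prop :=
    fun r => ({j, r} : Vtx k) ∈ σ ∧ r ∈ Cσ (σ.erase {j, r}) with hQ
  -- the third condition of `Fjt` is exactly `¬ Q t`
  have key : Eji i j σ → ∀ t ∈ Iji i j,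
      ((({j, t} : Vtx k) ∉ σ ∨ Cσ (σ.erase {j, t}) = {i, i + 1}) ↔ ¬ Q t) := by
    intro hE t ht
    obtain ⟨hti, hti1, _, _, htj1⟩ := aux_mem_Iji ht
    obtain ⟨hd1, hd2⟩ := aux_dichotomy hE.1.2.1 hE.2.1 hti hti1 htj1
    constructor
    · rintro (h | h) hQt
      · exact h hQt.1
      · exact (hd2.mpr h) hQt.2
    · intro hQt
      by_cases hmem : ({j, t} : Vtx k) ∈ σ
      · exact Or.inr (hd2.mp (fun h => hQt ⟨hmem, h⟩))
      · exact Or.inl hmem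
  -- the condition of `Fj` at `s` is exactly `Q s`
  have key2 : Eji i j σ → ∀ s ∈ Iji i j,
      ((({j, s} : Vtx k) ∈ σ ∧ Cσ (σ.erase {j, s}) = {i, i + 1, s}) ↔ Q s) := by
    intro hE s hs
    obtain ⟨hsi, hsi1, _, _, hsj1⟩ := aux_mem_Iji hs
    obtain ⟨hd1, _⟩ := aux_dichotomy hE.1.2.1 hE.2.1 hsi hsi1 hsj1
    exact and_congr_right' hd1.symm
  refine ⟨⟨?_, ?_⟩, ?_, ?_⟩
  · -- forward direction
    intro hE
    by_cases hall : ∀ s ∈ Iji i j, Q s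
    · exact Or.inr ⟨hE, fun s hs => (key2 hE s hs).mpr (hall s hs)⟩
    · push_neg at hall
      set S : Finset (ZMod (k + 4)) := (Iji i j).filter (fun r => ¬ Q r) with hS
      have hSne : S.Nonempty := by
        obtain ⟨s, hs, hns⟩ := hall
        exact ⟨s, Finset.mem_filter.mpr ⟨hs, hns⟩⟩
      obtain ⟨t, htS, htmin⟩ := Finset.exists_min_image S (fun r => r.val) hSne
      obtain ⟨htI, hnQt⟩ := Finset.mem_filter.mp htS
      refine Or.inl ⟨t, htI, hE, ?_, (key hE t htI).mpr hnQt⟩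
      intro r hr
      obtain ⟨hrI, hrlt⟩ := Finset.mem_filter.mp hr
      by_contra hnQr
      have := htmin r (Finset.mem_filter.mpr ⟨hrI, hnQr⟩)
      omega
  · -- backward direction
    rintro (⟨t, _, hF⟩ | hF) <;> exact hF.1
  · -- uniqueness of t
    intro t ht t' ht' hF hF'
    have hE := hF.1
    have hnQt : ¬ Q t := (key hE t ht).mp hF.2.2
    have hnQt' : ¬ Q t' := (key hE t' ht').mp hF'.2.2
    rcases lt_trichotomy t.val t'.val with h | h | h
    · exact absurd (hF'.2.1 t (Finset.mem_filter.mpr ⟨ht, h⟩)) hnQt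
    · exact ZMod.val_injective _ h
    · exact absurd (hF.2.1 t' (Finset.mem_filter.mpr ⟨ht', h⟩)) hnQt'
  · -- disjointness of the union with Fj
    rintro ⟨⟨t, ht, hF⟩, hFj⟩
    have hE := hFj.1
    exact (key hE t ht).mp hF.2.2 ((key2 hE t ht).mp (hFj.2 t ht)) |>.elim
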